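/- arXiv:1305.5311 — 3 statements merged into one kernel-verified Lean document; each statement's English description precedes it below -/
import Mathlib

section
/- Let X∘ be a symmetric solution of CGDARE(Σ). Let T ≥ 1, let X_T, X_{T−1}, …, X_0 be symmetric matrices with X_t = ℛ(X_{t+1}) for 0 ≤ t ≤ T−1, and assume each X_t satisfies ker R_{X_t} ⊆ ker S_{X_t} (which holds in particular when every X_t is positive semidefinite). Set Δ_i := X_i − X∘ and F_i := A_{X∘}ᵀ (I_n − Δ_i B (R + Bᵀ X_i B)† Bᵀ). Then for every integer τ with 1 ≤ τ ≤ T, Δ_{T−τ} = F_{T−τ+1} F_{T−τ+2} ⋯ F_T · Δ_T · (A_{X∘})^τ. -/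
open Matrix

-- The Moore–Penrose pseudoinverse of a real matrix, characterised by the four
-- Penrose equations (it exists and is unique for every real matrix).
open Classical in
noncomputable def mpinv {α β : Type*} [Fintype α] [Fintype β]
    (M : Matrix α β ℝ) : Matrix β α ℝ :=
  if h : ∃ P : Matrix β α ℝ,
      M * P * M = M ∧ P * M * P = P ∧ (M * P)ᵀ = M * P ∧ (P * M)ᵀ = P * M
  then h.choose else 0

/-- `R_X = R + BᵀXB`. -/
noncomputable def RX {ι κ : Type*} [Fintype ι] [Fintype κ]
    (R : Matrix κ κ ℝ) (B : Matrix ι κ ℝ) (X : Matrix ι ι ℝ) : Matrix κ κ ℝ :=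
  R + Bᵀ * X * B

/-- `S_X = AᵀXB + S`. -/
noncomputable def SX {ι κ : Type*} [Fintype ι] [Fintype κ]
    (A : Matrix ι ι ℝ) (B S : Matrix ι κ ℝ) (X : Matrix ι ι ℝ) : Matrix ι κ ℝ :=
  Aᵀ * X * B + S

/-- `K_X = R_X† S_Xᵀ`. -/
noncomputable def KX {ι κ : Type*} [Fintype ι] [Fintype κ]
    (A : Matrix ι ι ℝ) (B S : Matrix ι κ ℝ) (R : Matrix κ κ ℝ) (X : Matrix ι ι ℝ) :
    Matrix κ ι ℝ :=
  mpinv (RX R B X) * (SX A B S X)ᵀ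

/-- The closed-loop matrix `A_X = A - B K_X`. -/
noncomputable def AX {ι κ : Type*} [Fintype ι] [Fintype κ]
    (A : Matrix ι ι ℝ) (B S : Matrix ι κ ℝ) (R : Matrix κ κ ℝ) (X : Matrix ι ι ℝ) :
    Matrix ι ι ℝ :=
  A - B * KX A B S R X

/-- The kernel condition `ker R_X ⊆ ker S_X`. -/
def KerCond {ι κ : Type*} [Fintype ι] [Fintype κ]
    (A : Matrix ι ι ℝ) (B S : Matrix ι κ ℝ) (R : Matrix κ κ ℝ) (X : Matrix ι ι ℝ) : Prop :=
  ∀ v : κ → ℝ, (RX R B X).mulVec v = 0 → (SX A B S X).mulVec v = 0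

/-- The Riccati operator `𝔇(X) = X - AᵀXA + S_X R_X† S_Xᵀ - Q`. -/
noncomputable def DOp {ι κ : Type*} [Fintype ι] [Fintype κ]
    (A Q : Matrix ι ι ℝ) (B S : Matrix ι κ ℝ) (R : Matrix κ κ ℝ) (X : Matrix ι ι ℝ) :
    Matrix ι ι ℝ :=
  X - Aᵀ * X * A + SX A B S X * mpinv (RX R B X) * (SX A B S X)ᵀ - Q

/-- The Riccati map `ℛ(X) = AᵀXA - S_X R_X† S_Xᵀ + Q`. -/
noncomputable def Ricc {ι κ : Type*} [Fintype ι] [Fintype κ]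
    (A Q : Matrix ι ι ℝ) (B S : Matrix ι κ ℝ) (R : Matrix κ κ ℝ) (X : Matrix ι ι ℝ) :
    Matrix ι ι ℝ :=
  Aᵀ * X * A - SX A B S X * mpinv (RX R B X) * (SX A B S X)ᵀ + Q

/-- `X` is a symmetric solution of CGDARE(Σ): it is symmetric, satisfies the GDARE and
the kernel condition `ker R_X ⊆ ker S_X`. -/
def IsCGDARESolution {ι κ : Type*} [Fintype ι] [Fintype κ]
    (A Q : Matrix ι ι ℝ) (B S : Matrix ι κ ℝ) (R : Matrix κ κ ℝ) (X : Matrix ι ι ℝ) : Prop :=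
  Xᵀ = X ∧ X = Ricc A Q B S R X ∧ KerCond A B S R X

/-- The matrix `N = [[A, 0, B], [Q, -I, S], [Sᵀ, 0, R]]` of the extended symplectic pencil. -/
noncomputable def Nmat {n m : ℕ} (A Q : Matrix (Fin n) (Fin n) ℝ)
    (B S : Matrix (Fin n) (Fin m) ℝ) (R : Matrix (Fin m) (Fin m) ℝ) :
    Matrix (Fin n ⊕ (Fin n ⊕ Fin m)) (Fin n ⊕ (Fin n ⊕ Fin m)) ℝ :=
  fromBlocks A (fromCols 0 B) (fromRows Q Sᵀ) (fromBlocks (-1) S 0 R)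

/-- The matrix `M = [[I, 0, 0], [0, -Aᵀ, 0], [0, -Bᵀ, 0]]` of the extended symplectic pencil. -/
noncomputable def Mmat {n m : ℕ} (A : Matrix (Fin n) (Fin n) ℝ)
    (B : Matrix (Fin n) (Fin m) ℝ) :
    Matrix (Fin n ⊕ (Fin n ⊕ Fin m)) (Fin n ⊕ (Fin n ⊕ Fin m)) ℝ :=
  fromBlocks 1 0 0 (fromBlocks (-Aᵀ) 0 (-Bᵀ) 0)

namespace MPaux

variable {α : Type*} [Fintype α] [DecidableEq α]

theorem unique_mp {β : Type*} [Fintype β] {M : Matrix α β ℝ} {P₁ P₂ : Matrix β α ℝ}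
    (a₁ : M * P₁ * M = M) (b₁ : P₁ * M * P₁ = P₁) (c₁ : (M * P₁)ᵀ = M * P₁)
    (d₁ : (P₁ * M)ᵀ = P₁ * M)
    (a₂ : M * P₂ * M = M) (b₂ : P₂ * M * P₂ = P₂) (c₂ : (M * P₂)ᵀ = M * P₂)
    (d₂ : (P₂ * M)ᵀ = P₂ * M) : P₁ = P₂ := by
  have hMP : M * P₂ = M * P₁ := by
    calc M * P₂ = (M * P₂)ᵀ := c₂.symm
      _ = P₂ᵀ * Mᵀ := transpose_mul _ _
      _ = P₂ᵀ * (M * P₁ * M)ᵀ := by rw [a₁]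
      _ = P₂ᵀ * (Mᵀ * (M * P₁)) := by rw [transpose_mul, c₁]
      _ = (P₂ᵀ * Mᵀ) * (M * P₁) := by rw [Matrix.mul_assoc]
      _ = (M * P₂)ᵀ * (M * P₁) := by rw [transpose_mul]
      _ = M * P₂ * M * P₁ := by rw [c₂, ← Matrix.mul_assoc]
      _ = M * P₁ := by rw [a₂]
  have hPM : P₂ * M = P₁ * M := by
    calc P₂ * M = (P₂ * M)ᵀ := d₂.symm
      _ = Mᵀ * P₂ᵀ := transpose_mul _ _
      _ = (M * (P₁ * M))ᵀ * P₂ᵀ := by rw [← Matrix.mul_assoc, a₁]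
      _ = ((P₁ * M) * Mᵀ) * P₂ᵀ := by rw [transpose_mul, d₁]
      _ = (P₁ * M) * (Mᵀ * P₂ᵀ) := by rw [Matrix.mul_assoc]
      _ = (P₁ * M) * (P₂ * M)ᵀ := by rw [transpose_mul]
      _ = P₁ * (M * P₂ * M) := by rw [d₂]; simp only [Matrix.mul_assoc]
      _ = P₁ * M := by rw [a₂]
  calc P₁ = P₁ * M * P₁ := b₁.symm
    _ = P₂ * M * P₂ := by rw [← hPM, Matrix.mul_assoc, ← hMP, ← Matrix.mul_assoc, hPM]
    _ = P₂ := b₂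

theorem exists_mp_of_symm {M : Matrix α α ℝ} (h : Mᵀ = M) :
    ∃ P : Matrix α α ℝ,
      M * P * M = M ∧ P * M * P = P ∧ (M * P)ᵀ = M * P ∧ (P * M)ᵀ = P * M := by
  have hherm : M.IsHermitian := by
    unfold Matrix.IsHermitian
    rw [Matrix.conjTranspose_eq_transpose_of_trivial, h]
  classical
  set U : Matrix α α ℝ := (hherm.eigenvectorUnitary : Matrix α α ℝ) with hU
  set V : Matrix α α ℝ := star ((hherm.eigenvectorUnitary : Matrix α α ℝ)) with hV
  set d : α → ℝ := hherm.eigenvalues with hd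
  have hspec : M = U * diagonal d * V := by
    have := hherm.spectral_theorem
    simpa using this
  have hUU : V * U = 1 := (Matrix.mem_unitaryGroup_iff').mp hherm.eigenvectorUnitary.2
  have hstar : V = Uᵀ := by
    ext i j
    simp [hV, hU, Matrix.star_apply, Matrix.IsHermitian.eigenvectorUnitary_apply]
  have conj_mul : ∀ (Dm Dn : Matrix α α ℝ), (U*Dm*V)*(U*Dn*V) = U*(Dm*Dn)*V := by
    intro Dm Dn
    calc (U*Dm*V)*(U*Dn*V) = U*Dm*((V*U)*(Dn*V)) := by simp only [Matrix.mul_assoc]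
      _ = U*(Dm*Dn)*V := by rw [hUU, one_mul]; simp only [Matrix.mul_assoc]
  have key1 : diagonal d * diagonal (fun i => (d i)⁻¹) * diagonal d = diagonal d := by
    rw [diagonal_mul_diagonal, diagonal_mul_diagonal]
    congr 1; ext i
    rcases eq_or_ne (d i) 0 with h0 | h0 <;> field_simp [h0]
  have key2 : diagonal (fun i => (d i)⁻¹) * diagonal d * diagonal (fun i => (d i)⁻¹)
      = diagonal (fun i => (d i)⁻¹) := by
    rw [diagonal_mul_diagonal, diagonal_mul_diagonal]
    congr 1; ext i
    rcases eq_or_ne (d i) 0 with h0 | h0 <;> field_simp [h0]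
  refine ⟨U * diagonal (fun i => (d i)⁻¹) * V, ?_, ?_, ?_, ?_⟩
  · rw [hspec, conj_mul, conj_mul, key1]
  · rw [hspec, conj_mul, conj_mul, key2]
  · rw [hspec, conj_mul, hstar]
    simp [transpose_mul, diagonal_transpose, Matrix.mul_assoc]
  · rw [hspec, conj_mul, hstar]
    simp [transpose_mul, diagonal_transpose, Matrix.mul_assoc]

theorem mpinv_isMP {M : Matrix α α ℝ} (h : Mᵀ = M) :
    M * mpinv M * M = M ∧ mpinv M * M * mpinv M = mpinv M ∧
      (M * mpinv M)ᵀ = M * mpinv M ∧ (mpinv M * M)ᵀ = mpinv M * M := by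
  have hex : ∃ P : Matrix α α ℝ,
      M * P * M = M ∧ P * M * P = P ∧ (M * P)ᵀ = M * P ∧ (P * M)ᵀ = P * M :=
    exists_mp_of_symm h
  have he : mpinv M = hex.choose := by
    simp only [mpinv]
    rw [dif_pos hex]
  rw [he]
  exact hex.choose_spec

theorem mpinv_symm {M : Matrix α α ℝ} (h : Mᵀ = M) : (mpinv M)ᵀ = mpinv M := by
  obtain ⟨a, b, c, d⟩ := mpinv_isMP h
  have a' : M * (mpinv M)ᵀ * M = M := by
    calc M * (mpinv M)ᵀ * M = (Mᵀ * mpinv M * Mᵀ)ᵀ := by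
          simp only [transpose_mul, transpose_transpose, Matrix.mul_assoc]
      _ = (M * mpinv M * M)ᵀ := by rw [h]
      _ = Mᵀ := by rw [a]
      _ = M := h
  have b' : (mpinv M)ᵀ * M * (mpinv M)ᵀ = (mpinv M)ᵀ := by
    calc (mpinv M)ᵀ * M * (mpinv M)ᵀ = (mpinv M * Mᵀ * mpinv M)ᵀ := by
          simp only [transpose_mul, transpose_transpose, Matrix.mul_assoc]
      _ = (mpinv M * M * mpinv M)ᵀ := by rw [h]
      _ = (mpinv M)ᵀ := by rw [b]
  have c' : (M * (mpinv M)ᵀ)ᵀ = M * (mpinv M)ᵀ := by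
    calc (M * (mpinv M)ᵀ)ᵀ = mpinv M * Mᵀ := by simp only [transpose_mul, transpose_transpose]
      _ = mpinv M * M := by rw [h]
      _ = (mpinv M * M)ᵀ := d.symm
      _ = Mᵀ * (mpinv M)ᵀ := by simp only [transpose_mul]
      _ = M * (mpinv M)ᵀ := by rw [h]
  have d' : ((mpinv M)ᵀ * M)ᵀ = (mpinv M)ᵀ * M := by
    calc ((mpinv M)ᵀ * M)ᵀ = Mᵀ * mpinv M := by simp only [transpose_mul, transpose_transpose]
      _ = M * mpinv M := by rw [h]
      _ = (M * mpinv M)ᵀ := c.symm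
      _ = (mpinv M)ᵀ * Mᵀ := by simp only [transpose_mul]
      _ = (mpinv M)ᵀ * M := by rw [h]
  exact unique_mp a' b' c' d' a b c d

theorem mul_mpinv_mul_self {ι : Type*} [Fintype ι] {S' : Matrix ι α ℝ} {M : Matrix α α ℝ}
    (h : Mᵀ = M) (hker : ∀ v, M.mulVec v = 0 → S'.mulVec v = 0) :
    S' * mpinv M * M = S' := by
  obtain ⟨a, b, c, d⟩ := mpinv_isMP h
  have hz : S' * (1 - mpinv M * M) = 0 := by
    ext i j
    have hcol : M.mulVec (fun k => (1 - mpinv M * M) k j) = 0 := by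
      funext l
      have h2 : (M * (1 - mpinv M * M)) l j = (0 : Matrix α α ℝ) l j := by
        rw [Matrix.mul_sub, Matrix.mul_one, ← Matrix.mul_assoc, a, sub_self]
      simpa [Matrix.mulVec, Matrix.mul_apply, dotProduct] using h2
    have h3 := congrFun (hker _ hcol) i
    simpa [Matrix.mulVec, Matrix.mul_apply, dotProduct] using h3
  rw [Matrix.mul_sub, Matrix.mul_one, sub_eq_zero] at hz
  rw [Matrix.mul_assoc]
  exact hz.symm

end MPaux

open MPaux in
set_option maxHeartbeats 1600000 in
theorem step_key {ι κ : Type*} [Fintype ι] [Fintype κ] [DecidableEq ι] [DecidableEq κ]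
    (A Q : Matrix ι ι ℝ) (B S : Matrix ι κ ℝ) (R : Matrix κ κ ℝ) (hR : Rᵀ = R)
    (Xo : Matrix ι ι ℝ) (hXo : IsCGDARESolution A Q B S R Xo)
    (Y : Matrix ι ι ℝ) (hY : Yᵀ = Y) (hkerY : KerCond A B S R Y) :
    Ricc A Q B S R Y - Xo =
      (AX A B S R Xo)ᵀ * (1 - (Y - Xo) * B * mpinv (R + Bᵀ * Y * B) * Bᵀ) * (Y - Xo) *
        (AX A B S R Xo) := by
  obtain ⟨hXoT, hXoEq, hXoKer⟩ := hXo
  simp only [KerCond, RX, SX] at hkerY hXoKer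
  simp only [Ricc, RX, SX] at hXoEq
  simp only [Ricc, RX, SX, AX, KX]
  have hNsym : (R + Bᵀ * Y * B)ᵀ = R + Bᵀ * Y * B := by
    simp only [transpose_add, transpose_mul, transpose_transpose, hR, hY, Matrix.mul_assoc]
  have hNosym : (R + Bᵀ * Xo * B)ᵀ = R + Bᵀ * Xo * B := by
    simp only [transpose_add, transpose_mul, transpose_transpose, hR, hXoT, Matrix.mul_assoc]
  have htr : (Aᵀ * Y * B + S)ᵀ = Bᵀ * Y * A + Sᵀ := by
    simp only [transpose_add, transpose_mul, transpose_transpose, hY, Matrix.mul_assoc]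
  have htro : (Aᵀ * Xo * B + S)ᵀ = Bᵀ * Xo * A + Sᵀ := by
    simp only [transpose_add, transpose_mul, transpose_transpose, hXoT, Matrix.mul_assoc]
  rw [htr]
  obtain ⟨nA, nB, nC, nD⟩ := mpinv_isMP hNsym
  have hPsym := mpinv_symm hNsym
  have hPosym := mpinv_symm hNosym
  have rSPN : (Aᵀ * Y * B + S) * mpinv (R + Bᵀ * Y * B) * (R + Bᵀ * Y * B)
      = Aᵀ * Y * B + S := mul_mpinv_mul_self hNsym hkerY
  have fo2 : (Aᵀ * Xo * B + S) * mpinv (R + Bᵀ * Xo * B) * (R + Bᵀ * Xo * B)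
      = Aᵀ * Xo * B + S := mul_mpinv_mul_self hNosym hXoKer
  set SY := Aᵀ * Y * B + S with hSY
  set SO := Aᵀ * Xo * B + S with hSO
  set N := R + Bᵀ * Y * B with hN
  set No := R + Bᵀ * Xo * B with hNo
  set P := mpinv N with hP
  set Po := mpinv No with hPo
  set K := Po * SOᵀ with hK
  set Δ := Y - Xo with hΔ
  set G := Bᵀ * Y * A + Sᵀ with hG
  have key1 : No * K = SOᵀ := by
    rw [hK, ← Matrix.mul_assoc]
    calc No * Po * SOᵀ = (SO * Poᵀ * Noᵀ)ᵀ := by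
          simp only [transpose_mul, transpose_transpose, Matrix.mul_assoc]
      _ = (SO * Po * No)ᵀ := by rw [hPosym, hNosym]
      _ = SOᵀ := by rw [fo2]
  have key1' : (R + Bᵀ * Xo * B) * K = Bᵀ * Xo * A + Sᵀ := by
    rw [← hNo, key1]; exact htro
  have key2' : Kᵀ * No = SO := by
    rw [hK]
    calc (Po * SOᵀ)ᵀ * No = SO * Po * No := by
          simp only [transpose_mul, transpose_transpose, hPosym, Matrix.mul_assoc]
      _ = SO := fo2
  have key2 : Kᵀ * (R + Bᵀ * Xo * B) = Aᵀ * Xo * B + S := by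
    rw [← hNo, key2']
  have rsym : SO * K = Kᵀ * SOᵀ := by
    rw [hK]
    simp only [transpose_mul, transpose_transpose, hPosym, Matrix.mul_assoc]
  have gdare : Xo = Aᵀ * Xo * A - SO * K + Q := by
    rw [hK, ← Matrix.mul_assoc]; exact hXoEq
  have rNPG : N * (P * G) = G := by
    have h' := congrArg Matrix.transpose rSPN
    simp only [transpose_mul, Matrix.mul_assoc] at h'
    rw [hNsym, hPsym] at h'
    rw [htr] at h'
    exact h'
  have rNPNK : N * (P * (N * K)) = N * K := by
    have h2 := congrArg (fun Z => Z * K) nA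
    simp only [Matrix.mul_assoc] at h2 ⊢
    exact h2
  have rSPNK : SY * (P * (N * K)) = SY * K := by
    have h2 := congrArg (fun Z => Z * K) rSPN
    simp only [Matrix.mul_assoc] at h2 ⊢
    exact h2
  have g1 : Bᵀ * Δ * (A - B * K) = G - N * K := by
    rw [hΔ, hG, hN]
    calc Bᵀ * (Y - Xo) * (A - B * K)
        = (Bᵀ * Y * A + Sᵀ - (R + Bᵀ * Y * B) * K)
            + ((R + Bᵀ * Xo * B) * K - (Bᵀ * Xo * A + Sᵀ)) := by
          simp only [Matrix.mul_sub, Matrix.sub_mul, Matrix.mul_add, Matrix.add_mul,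
            Matrix.mul_assoc]
          abel
      _ = Bᵀ * Y * A + Sᵀ - (R + Bᵀ * Y * B) * K := by rw [key1']; abel
  have g2 : (A - B * K)ᵀ * Δ * B = SY - Kᵀ * N := by
    rw [hΔ, hSY, hN]
    calc (A - B * K)ᵀ * (Y - Xo) * B
        = (Aᵀ * Y * B + S - Kᵀ * (R + Bᵀ * Y * B))
            + (Kᵀ * (R + Bᵀ * Xo * B) - (Aᵀ * Xo * B + S)) := by
          simp only [transpose_sub, transpose_mul, Matrix.mul_sub, Matrix.sub_mul,
            Matrix.mul_add, Matrix.add_mul, Matrix.mul_assoc]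
          abel
      _ = Aᵀ * Y * B + S - Kᵀ * (R + Bᵀ * Y * B) := by rw [key2]; abel
  have g3 : (A - B * K)ᵀ * Δ * A = Aᵀ * Δ * A - Kᵀ * G + Kᵀ * SOᵀ := by
    rw [hΔ, hG, htro]
    simp only [transpose_sub, transpose_mul, Matrix.mul_sub, Matrix.sub_mul,
      Matrix.mul_add, Matrix.add_mul, Matrix.mul_assoc]
    abel
  have main : (A - B * K)ᵀ * (1 - Δ * B * P * Bᵀ) * Δ * (A - B * K)
      = Aᵀ * Δ * A + SO * K - SY * (P * G) := by
    calc (A - B * K)ᵀ * (1 - Δ * B * P * Bᵀ) * Δ * (A - B * K)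
        = (A - B * K)ᵀ * Δ * (A - B * K)
            - ((A - B * K)ᵀ * Δ * B) * P * (Bᵀ * Δ * (A - B * K)) := by
          simp only [Matrix.mul_sub, Matrix.sub_mul, Matrix.mul_one, Matrix.one_mul,
            Matrix.mul_assoc]
          abel
      _ = (A - B * K)ᵀ * Δ * (A - B * K) - (SY - Kᵀ * N) * P * (G - N * K) := by
          rw [g1, g2]
      _ = (A - B * K)ᵀ * Δ * A - ((A - B * K)ᵀ * Δ * B) * K
            - (SY - Kᵀ * N) * P * (G - N * K) := by
          simp only [Matrix.mul_sub, Matrix.sub_mul, Matrix.mul_add, Matrix.add_mul,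
            Matrix.mul_assoc]
      _ = (Aᵀ * Δ * A - Kᵀ * G + Kᵀ * SOᵀ) - (SY - Kᵀ * N) * K
            - (SY - Kᵀ * N) * P * (G - N * K) := by rw [g2, g3]
      _ = Aᵀ * Δ * A + Kᵀ * SOᵀ
            - (SY * (P * G) - SY * (P * (N * K)) - Kᵀ * (N * (P * G))
                + Kᵀ * (N * (P * (N * K))))
            - SY * K + Kᵀ * (N * K) - Kᵀ * G := by
          simp only [Matrix.mul_sub, Matrix.sub_mul, Matrix.mul_add, Matrix.add_mul,
            Matrix.mul_assoc]
          abel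
      _ = Aᵀ * Δ * A + Kᵀ * SOᵀ
            - (SY * (P * G) - SY * K - Kᵀ * G + Kᵀ * (N * K))
            - SY * K + Kᵀ * (N * K) - Kᵀ * G := by rw [rNPG, rNPNK, rSPNK]
      _ = Aᵀ * Δ * A + Kᵀ * SOᵀ - SY * (P * G) := by abel
      _ = Aᵀ * Δ * A + SO * K - SY * (P * G) := by rw [rsym]
  rw [main, hΔ]
  conv_lhs => rw [gdare]
  simp only [Matrix.mul_sub, Matrix.sub_mul, Matrix.mul_assoc]
  abel

/-- backward product formula
`Δ_{T-τ} = F_{T-τ+1} ⋯ F_T · Δ_T · (A_{X∘})^τ` for the generalised Riccati difference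
equation, where `F_i = A_{X∘}ᵀ (I - Δ_i B (R + BᵀX_iB)† Bᵀ)` and `Δ_i = X_i - X∘`. -/
theorem stmt_16 {n m : ℕ} (hn : 0 < n) (hm : 0 < m)
    (A Q : Matrix (Fin n) (Fin n) ℝ) (B S : Matrix (Fin n) (Fin m) ℝ)
    (R : Matrix (Fin m) (Fin m) ℝ)
    (hPi : (fromBlocks Q S Sᵀ R).PosSemidef)
    (Xo : Matrix (Fin n) (Fin n) ℝ) (hXo : IsCGDARESolution A Q B S R Xo)
    (T : ℕ) (hT : 1 ≤ T) (X : ℕ → Matrix (Fin n) (Fin n) ℝ)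
    (hsymm : ∀ t ≤ T, (X t)ᵀ = X t)
    (hrec : ∀ t < T, X t = Ricc A Q B S R (X (t + 1)))
    (hker : ∀ t ≤ T, KerCond A B S R (X t)) :
    ∀ τ : ℕ, 1 ≤ τ → τ ≤ T →
      X (T - τ) - Xo =
        ((List.range τ).map (fun i =>
            (AX A B S R Xo)ᵀ *
              (1 - (X (T - τ + 1 + i) - Xo) * B *
                mpinv (R + Bᵀ * X (T - τ + 1 + i) * B) * Bᵀ))).prod *
          (X T - Xo) * (AX A B S R Xo) ^ τ  := by
  have hR : Rᵀ = R := by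
    have h := hPi.1
    ext i j
    have h2 := congrFun (congrFun h (Sum.inr i)) (Sum.inr j)
    simpa using h2
  intro τ hτ1
  induction τ, hτ1 using Nat.le_induction with
  | base =>
    intro _
    have h1 : T - 1 < T := by omega
    have hT1 : T - 1 + 1 = T := by omega
    calc X (T - 1) - Xo = Ricc A Q B S R (X T) - Xo := by rw [hrec (T-1) h1, hT1]
      _ = (AX A B S R Xo)ᵀ *
            (1 - (X T - Xo) * B * mpinv (R + Bᵀ * X T * B) * Bᵀ) * (X T - Xo) *
            (AX A B S R Xo) :=
          step_key A Q B S R hR Xo hXo (X T) (hsymm T le_rfl) (hker T le_rfl)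
      _ = ((List.range 1).map (fun i =>
              (AX A B S R Xo)ᵀ *
                (1 - (X (T - 1 + 1 + i) - Xo) * B *
                  mpinv (R + Bᵀ * X (T - 1 + 1 + i) * B) * Bᵀ))).prod *
            (X T - Xo) * (AX A B S R Xo) ^ 1 := by
          have hidx : T - 1 + 1 + 0 = T := by omega
          rw [List.range_succ, List.range_zero]
          simp only [List.nil_append, List.map_cons, List.map_nil, List.prod_cons,
            List.prod_nil, mul_one, hidx, Nat.add_zero, pow_one]
  | succ τ hτ ih =>
    intro hτ1T
    have ihh := ih (by omega)
    have hidx1 : T - (τ + 1) + 1 = T - τ := by omega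
    set A0 := AX A B S R Xo with hA0
    have hstep : X (T - (τ + 1)) - Xo =
        A0ᵀ * (1 - (X (T - τ) - Xo) * B * mpinv (R + Bᵀ * X (T - τ) * B) * Bᵀ) *
          (X (T - τ) - Xo) * A0 := by
      have h2 : T - (τ + 1) < T := by omega
      rw [hrec _ h2, hidx1, hA0]
      exact step_key A Q B S R hR Xo hXo (X (T - τ)) (hsymm _ (by omega))
        (hker _ (by omega))
    set F := A0ᵀ * (1 - (X (T - τ) - Xo) * B * mpinv (R + Bᵀ * X (T - τ) * B) * Bᵀ)
      with hF
    have hlist : ((List.range (τ + 1)).map (fun i =>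
          A0ᵀ * (1 - (X (T - (τ + 1) + 1 + i) - Xo) * B *
            mpinv (R + Bᵀ * X (T - (τ + 1) + 1 + i) * B) * Bᵀ))).prod
        = F * ((List.range τ).map (fun i =>
            A0ᵀ * (1 - (X (T - τ + 1 + i) - Xo) * B *
              mpinv (R + Bᵀ * X (T - τ + 1 + i) * B) * Bᵀ))).prod := by
      rw [List.range_succ_eq_map, List.map_cons, List.prod_cons, List.map_map]
      have hidx0 : T - (τ + 1) + 1 + 0 = T - τ := by omega
      have hidx : ∀ i : ℕ, T - (τ + 1) + 1 + (i + 1) = T - τ + 1 + i := by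
        intro i; omega
      have hfun : ((fun i =>
            A0ᵀ * (1 - (X (T - (τ + 1) + 1 + i) - Xo) * B *
              mpinv (R + Bᵀ * X (T - (τ + 1) + 1 + i) * B) * Bᵀ)) ∘ Nat.succ)
          = (fun i =>
            A0ᵀ * (1 - (X (T - τ + 1 + i) - Xo) * B *
              mpinv (R + Bᵀ * X (T - τ + 1 + i) * B) * Bᵀ)) := by
        funext i
        simp only [Function.comp_apply, Nat.succ_eq_add_one, hidx]
      rw [hfun, hF]
      simp only [hidx0, Nat.add_zero]
    calc X (T - (τ + 1)) - Xo
        = F * (X (T - τ) - Xo) * A0 := hstep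
      _ = F * (((List.range τ).map (fun i =>
              A0ᵀ * (1 - (X (T - τ + 1 + i) - Xo) * B *
                mpinv (R + Bᵀ * X (T - τ + 1 + i) * B) * Bᵀ))).prod *
            (X T - Xo) * A0 ^ τ) * A0 := by rw [ihh]
      _ = (F * ((List.range τ).map (fun i =>
              A0ᵀ * (1 - (X (T - τ + 1 + i) - Xo) * B *
                mpinv (R + Bᵀ * X (T - τ + 1 + i) * B) * Bᵀ))).prod) *
            (X T - Xo) * A0 ^ (τ + 1) := by
          simp only [pow_succ, Matrix.mul_assoc]
      _ = ((List.range (τ + 1)).map (fun i =>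
              A0ᵀ * (1 - (X (T - (τ + 1) + 1 + i) - Xo) * B *
                mpinv (R + Bᵀ * X (T - (τ + 1) + 1 + i) * B) * Bᵀ))).prod *
            (X T - Xo) * A0 ^ (τ + 1) := by rw [hlist]
end

section
/- Let X∘ be a symmetric solution of CGDARE(Σ) and let ν be the nilpotency index of A_{X∘}, i.e., the smallest integer k ≥ 0 such that ker (A_{X∘})^k = ker (A_{X∘})^{k+1}. Let T ≥ 1, let P = Pᵀ ≥ 0, and let X_T = P, X_t = ℛ(X_{t+1}) for 0 ≤ t ≤ T−1 be the solution of the generalised Riccati difference equation; assume each X_t is symmetric and satisfies ker R_{X_t} ⊆ ker S_{X_t} (which holds in particular when every X_t is positive semidefinite). Then for every integer τ with ν ≤ τ ≤ T, (X_{T−τ} − X∘) u = 0 for all u ∈ 𝒰 := ker (A_{X∘})^n. -/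
open Matrix

def IsPinv {α β : Type*} [Fintype α] [Fintype β] (M : Matrix α β ℝ) (P : Matrix β α ℝ) : Prop :=
  M * P * M = M ∧ P * M * P = P ∧ (M * P)ᵀ = M * P ∧ (P * M)ᵀ = P * M

theorem pinv_unique {α β : Type*} [Fintype α] [Fintype β] {M : Matrix α β ℝ}
    {P P' : Matrix β α ℝ} (h : IsPinv M P) (h' : IsPinv M P') : P = P' := by
  obtain ⟨h1, h2, h3, h4⟩ := h
  obtain ⟨h1', h2', h3', h4'⟩ := h'
  have hMP : M * P = M * P' := by
    calc M * P = (M * P' * M) * P := by rw [h1']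
    _ = (M * P') * (M * P) := by simp only [Matrix.mul_assoc]
    _ = (M * P')ᵀ * (M * P)ᵀ := by rw [h3, h3']
    _ = ((M * P) * (M * P'))ᵀ := (Matrix.transpose_mul _ _).symm
    _ = (M * P * M * P')ᵀ := by simp only [Matrix.mul_assoc]
    _ = (M * P')ᵀ := by rw [h1]
    _ = M * P' := h3'
  have hPM : P * M = P' * M := by
    calc P * M = P * (M * P' * M) := by rw [h1']
    _ = (P * M) * (P' * M) := by simp only [Matrix.mul_assoc]
    _ = (P * M)ᵀ * (P' * M)ᵀ := by rw [h4, h4']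
    _ = ((P' * M) * (P * M))ᵀ := (Matrix.transpose_mul _ _).symm
    _ = (P' * (M * P * M))ᵀ := by simp only [Matrix.mul_assoc]
    _ = (P' * M)ᵀ := by rw [h1]
    _ = P' * M := h4'
  calc P = P * M * P := h2.symm
  _ = P' := by rw [hPM, Matrix.mul_assoc, hMP, ← Matrix.mul_assoc, h2']

theorem exists_pinv_of_isSymm {α : Type*} [Fintype α] [DecidableEq α]
    {M : Matrix α α ℝ} (hM : Mᵀ = M) : ∃ P, IsPinv M P := by
  have hH : M.IsHermitian := by
    rw [Matrix.IsHermitian, conjTranspose_eq_transpose_of_trivial]; exact hM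
  set U : Matrix α α ℝ := (hH.eigenvectorUnitary : Matrix α α ℝ) with hU
  have hUU : star U * U = 1 := (Matrix.mem_unitaryGroup_iff').mp hH.eigenvectorUnitary.2
  set d : α → ℝ := hH.eigenvalues with hd
  have hspec : M = U * diagonal (RCLike.ofReal ∘ d) * star U := hH.spectral_theorem
  have hco : (RCLike.ofReal ∘ d : α → ℝ) = d := by funext i; simp [RCLike.ofReal]
  rw [hco] at hspec
  set d' : α → ℝ := fun i => if d i = 0 then 0 else (d i)⁻¹ with hd'
  have key : ∀ E F : Matrix α α ℝ,
      (U * E * star U) * (U * F * star U) = U * (E * F) * star U := by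
    intro E F
    calc (U * E * star U) * (U * F * star U) = U * E * (star U * U) * F * star U := by
          simp only [Matrix.mul_assoc]
    _ = U * (E * F) * star U := by rw [hUU]; simp only [Matrix.mul_one, Matrix.mul_assoc]
  have hdd' : diagonal d * diagonal d' * diagonal d = diagonal d := by
    rw [diagonal_mul_diagonal, diagonal_mul_diagonal]
    apply congrArg; funext i
    by_cases h : d i = 0 <;> simp [hd', h]
  have hd'd : diagonal d' * diagonal d * diagonal d' = diagonal d' := by
    rw [diagonal_mul_diagonal, diagonal_mul_diagonal]
    apply congrArg; funext i
    by_cases h : d i = 0 <;> simp [hd', h]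
  have hstar : star U = Uᵀ := by
    rw [Matrix.star_eq_conjTranspose, conjTranspose_eq_transpose_of_trivial]
  have hsymmconj : ∀ e : α → ℝ, (U * diagonal e * star U)ᵀ = U * diagonal e * star U := by
    intro e
    rw [hstar]
    simp only [Matrix.transpose_mul, Matrix.transpose_transpose, Matrix.diagonal_transpose,
      Matrix.mul_assoc]
  refine ⟨U * diagonal d' * star U, ?_, ?_, ?_, ?_⟩
  · rw [hspec, key, key, hdd']
  · rw [hspec, key, key, hd'd]
  · rw [hspec, key, diagonal_mul_diagonal, hsymmconj]
  · rw [hspec, key, diagonal_mul_diagonal, hsymmconj]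

theorem mpinv_isPinv {α : Type*} [Fintype α] [DecidableEq α]
    {M : Matrix α α ℝ} (hM : Mᵀ = M) : IsPinv M (mpinv M) := by
  have hex : ∃ P : Matrix α α ℝ,
      M * P * M = M ∧ P * M * P = P ∧ (M * P)ᵀ = M * P ∧ (P * M)ᵀ = P * M :=
    exists_pinv_of_isSymm hM
  have : mpinv M = hex.choose := dif_pos hex
  rw [this]
  exact hex.choose_spec

theorem mpinv_isSymm {α : Type*} [Fintype α] [DecidableEq α]
    {M : Matrix α α ℝ} (hM : Mᵀ = M) : (mpinv M)ᵀ = mpinv M := by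
  obtain ⟨h1, h2, h3, h4⟩ := mpinv_isPinv hM
  set P := mpinv M
  have hPt : IsPinv M Pᵀ := by
    refine ⟨?_, ?_, ?_, ?_⟩
    · calc M * Pᵀ * M = (Mᵀ * P * Mᵀ)ᵀ := by
            simp only [Matrix.transpose_mul, Matrix.transpose_transpose, Matrix.mul_assoc]
      _ = M := by rw [hM, h1, hM]
    · calc Pᵀ * M * Pᵀ = (P * Mᵀ * P)ᵀ := by
            simp only [Matrix.transpose_mul, Matrix.transpose_transpose, Matrix.mul_assoc]
      _ = Pᵀ := by rw [hM, h2]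
    · calc (M * Pᵀ)ᵀ = P * Mᵀ := by
            rw [Matrix.transpose_mul, Matrix.transpose_transpose]
      _ = P * M := by rw [hM]
      _ = (P * M)ᵀ := h4.symm
      _ = Mᵀ * Pᵀ := Matrix.transpose_mul _ _
      _ = M * Pᵀ := by rw [hM]
    · calc (Pᵀ * M)ᵀ = Mᵀ * P := by
            rw [Matrix.transpose_mul, Matrix.transpose_transpose]
      _ = M * P := by rw [hM]
      _ = (M * P)ᵀ := h3.symm
      _ = Pᵀ * Mᵀ := Matrix.transpose_mul _ _
      _ = Pᵀ * M := by rw [hM]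
  exact pinv_unique hPt (mpinv_isPinv hM)

theorem eq_zero_of_forall_mulVec {α β : Type*} [Fintype α] [Fintype β] [DecidableEq β]
    {M : Matrix α β ℝ} (h : ∀ v, M.mulVec v = 0) : M = 0 := by
  ext i j
  have := congrFun (h (Pi.single j 1)) i
  rw [mulVec_single_one] at this
  simpa using this

section Lemmas
variable {ι κ : Type*} [Fintype ι] [Fintype κ] [DecidableEq κ]
variable {A Q : Matrix ι ι ℝ} {B S : Matrix ι κ ℝ} {R : Matrix κ κ ℝ} {X Y : Matrix ι ι ℝ}

theorem RX_symm (hR : Rᵀ = R) (hX : Xᵀ = X) : (RX R B X)ᵀ = RX R B X := by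
  unfold RX
  rw [Matrix.transpose_add, hR, Matrix.transpose_mul, Matrix.transpose_mul,
    Matrix.transpose_transpose, hX, Matrix.mul_assoc]

theorem sx_g_rx (hR : Rᵀ = R) (hX : Xᵀ = X) (hker : KerCond A B S R X) :
    SX A B S X * mpinv (RX R B X) * RX R B X = SX A B S X := by
  obtain ⟨h1, h2, h3, h4⟩ := mpinv_isPinv (RX_symm hR hX (B := B))
  set rx := RX R B X
  set G := mpinv rx
  set sx := SX A B S X
  have key : sx * G * rx - sx = 0 := by
    apply eq_zero_of_forall_mulVec
    intro v
    have hw : rx.mulVec (v - (G * rx).mulVec v) = 0 := by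
      rw [Matrix.mulVec_sub, Matrix.mulVec_mulVec, ← Matrix.mul_assoc, h1, sub_self]
    have h5 := hker _ hw
    rw [Matrix.mulVec_sub, Matrix.mulVec_mulVec, ← Matrix.mul_assoc, sub_eq_zero] at h5
    rw [Matrix.sub_mulVec, ← h5, sub_self]
  rw [sub_eq_zero] at key
  exact key

theorem rx_g_sxt (hR : Rᵀ = R) (hX : Xᵀ = X) (hker : KerCond A B S R X) :
    RX R B X * mpinv (RX R B X) * (SX A B S X)ᵀ = (SX A B S X)ᵀ := by
  have hrx := RX_symm hR hX (B := B)
  have hG := mpinv_isSymm hrx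
  have := congrArg Matrix.transpose (sx_g_rx hR hX hker (A := A) (S := S))
  rwa [Matrix.transpose_mul, Matrix.transpose_mul, hrx, hG, ← Matrix.mul_assoc] at this

end Lemmas

section Main
variable {ι κ : Type*} [Fintype ι] [Fintype κ] [DecidableEq κ]
variable {A Q : Matrix ι ι ℝ} {B S : Matrix ι κ ℝ} {R : Matrix κ κ ℝ} {X Y : Matrix ι ι ℝ}

theorem riccDiff (hR : Rᵀ = R) (hX : Xᵀ = X) (hY : Yᵀ = Y)
    (hkX : KerCond A B S R X) (hkY : KerCond A B S R Y) :
    Ricc A Q B S R X - Ricc A Q B S R Y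
      = (AX A B S R X)ᵀ * (X - Y) * (AX A B S R Y) := by
  have hgx : (mpinv (RX R B X))ᵀ = mpinv (RX R B X) := mpinv_isSymm (RX_symm hR hX)
  have hgy : (mpinv (RX R B Y))ᵀ = mpinv (RX R B Y) := mpinv_isSymm (RX_symm hR hY)
  have f1 : SX A B S X * mpinv (RX R B X) * RX R B X = SX A B S X := sx_g_rx hR hX hkX
  have f2 : RX R B Y * mpinv (RX R B Y) * (SX A B S Y)ᵀ = (SX A B S Y)ᵀ := rx_g_sxt hR hY hkY
  set sx := SX A B S X with hsx
  set sy := SX A B S Y with hsy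
  set rx := RX R B X with hrxd
  set ry := RX R B Y with hryd
  set gx := mpinv rx
  set gy := mpinv ry
  have e1 : Aᵀ * X * B = sx - S := by rw [hsx]; unfold SX; abel
  have e1' : Aᵀ * Y * B = sy - S := by rw [hsy]; unfold SX; abel
  have e2 : Bᵀ * X * A = sxᵀ - Sᵀ := by
    have h := congrArg Matrix.transpose e1
    rw [Matrix.transpose_sub] at h
    rw [← h]
    simp only [Matrix.transpose_mul, Matrix.transpose_transpose, hX, Matrix.mul_assoc]
  have e2' : Bᵀ * Y * A = syᵀ - Sᵀ := by
    have h := congrArg Matrix.transpose e1'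
    rw [Matrix.transpose_sub] at h
    rw [← h]
    simp only [Matrix.transpose_mul, Matrix.transpose_transpose, hY, Matrix.mul_assoc]
  have e3 : Bᵀ * X * B = rx - R := by rw [hrxd]; unfold RX; abel
  have e3' : Bᵀ * Y * B = ry - R := by rw [hryd]; unfold RX; abel
  have hAXt : (AX A B S R X)ᵀ = Aᵀ - sx * gx * Bᵀ := by
    show (A - B * (gx * sxᵀ))ᵀ = _
    simp only [Matrix.transpose_sub, Matrix.transpose_mul, Matrix.transpose_transpose, hgx,
      Matrix.mul_assoc]
  have hAY : AX A B S R Y = A - B * (gy * syᵀ) := rfl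
  rw [hAXt, hAY]
  have expand : (Aᵀ - sx * gx * Bᵀ) * (X - Y) * (A - B * (gy * syᵀ))
      = (Aᵀ * X * A - Aᵀ * Y * A) - (Aᵀ * X * B - Aᵀ * Y * B) * (gy * syᵀ)
        - sx * gx * (Bᵀ * X * A - Bᵀ * Y * A)
        + sx * gx * ((Bᵀ * X * B - Bᵀ * Y * B) * (gy * syᵀ)) := by
    simp only [Matrix.sub_mul, Matrix.mul_sub, Matrix.mul_assoc]
    abel
  rw [expand, e1, e1', e2, e2', e3, e3']
  have r1 : sx - S - (sy - S) = sx - sy := by abel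
  have r2 : sxᵀ - Sᵀ - (syᵀ - Sᵀ) = sxᵀ - syᵀ := by abel
  have r3 : rx - R - (ry - R) = rx - ry := by abel
  rw [r1, r2, r3]
  have hc1 : sx * gx * ((rx - ry) * (gy * syᵀ))
      = sx * (gy * syᵀ) - sx * gx * syᵀ := by
    rw [Matrix.sub_mul, Matrix.mul_sub]
    congr 1
    · rw [← Matrix.mul_assoc, f1]
    · rw [← Matrix.mul_assoc ry gy syᵀ, f2]
  rw [hc1]
  unfold Ricc
  simp only [Matrix.sub_mul, Matrix.mul_sub, Matrix.mul_assoc]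
  abel

end Main


theorem ker_pow_exists {n : ℕ} (M : Matrix (Fin n) (Fin n) ℝ) :
    ∃ k, {v : Fin n → ℝ | (M ^ k).mulVec v = 0} = {v : Fin n → ℝ | (M ^ (k+1)).mulVec v = 0} := by
  by_contra hc
  push_neg at hc
  have mono : ∀ k, LinearMap.ker (M^k).mulVecLin ≤ LinearMap.ker (M^(k+1)).mulVecLin := by
    intro k v hv
    rw [LinearMap.mem_ker, Matrix.mulVecLin_apply] at hv ⊢
    rw [pow_succ', ← Matrix.mulVec_mulVec, hv, Matrix.mulVec_zero]
  have strict : ∀ k, LinearMap.ker (M^k).mulVecLin < LinearMap.ker (M^(k+1)).mulVecLin := by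
    intro k
    refine lt_of_le_of_ne (mono k) ?_
    intro he
    apply hc k
    ext v
    constructor
    · intro hv
      have : v ∈ LinearMap.ker (M^k).mulVecLin := by
        rw [LinearMap.mem_ker, Matrix.mulVecLin_apply]; exact hv
      rw [he, LinearMap.mem_ker, Matrix.mulVecLin_apply] at this
      exact this
    · intro hv
      have : v ∈ LinearMap.ker (M^(k+1)).mulVecLin := by
        rw [LinearMap.mem_ker, Matrix.mulVecLin_apply]; exact hv
      rw [← he, LinearMap.mem_ker, Matrix.mulVecLin_apply] at this
      exact this
  have hrank : ∀ k, k ≤ Module.finrank ℝ (LinearMap.ker (M^k).mulVecLin) := by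
    intro k
    induction k with
    | zero => exact Nat.zero_le _
    | succ k ih =>
      exact Nat.succ_le_of_lt
        (lt_of_le_of_lt ih (Submodule.finrank_lt_finrank_of_lt (strict k)))
  have h1 := hrank (n+1)
  have h2 := Submodule.finrank_le (LinearMap.ker (M^(n+1)).mulVecLin)
  rw [Module.finrank_fin_fun] at h2
  omega

theorem ker_pow_stab {n : ℕ} (M : Matrix (Fin n) (Fin n) ℝ) (ν : ℕ)
    (hmem : {v : Fin n → ℝ | (M ^ ν).mulVec v = 0}
      = {v : Fin n → ℝ | (M ^ (ν+1)).mulVec v = 0}) :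
    ∀ j, {v : Fin n → ℝ | (M ^ (ν + j)).mulVec v = 0}
      = {v : Fin n → ℝ | (M ^ ν).mulVec v = 0} := by
  intro j
  induction j with
  | zero => rfl
  | succ j ih =>
    rw [← ih]
    ext v
    simp only [Set.mem_setOf_eq]
    constructor
    · intro hv
      have h1 : (M ^ (ν+1)).mulVec ((M ^ j).mulVec v) = 0 := by
        rw [Matrix.mulVec_mulVec, ← pow_add]
        rw [show ν + 1 + j = ν + (j + 1) by omega]
        exact hv
      have h2 : ((M ^ j).mulVec v) ∈ {v : Fin n → ℝ | (M ^ (ν+1)).mulVec v = 0} := h1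
      rw [← hmem] at h2
      rw [Set.mem_setOf_eq, Matrix.mulVec_mulVec, ← pow_add] at h2
      exact h2
    · intro hv
      rw [show ν + (j+1) = (ν + j) + 1 by omega, pow_succ', ← Matrix.mulVec_mulVec, hv,
        Matrix.mulVec_zero]

/-- if `ν` is the nilpotency index of `A_{X∘}`, then for every `ν ≤ τ ≤ T`
the solution of the GRDE with terminal condition `X_T = P` satisfies
`(X_{T-τ} - X∘) u = 0` for all `u ∈ 𝒰 = ker (A_{X∘})^n`. -/
theorem stmt_17 {n m : ℕ} (hn : 0 < n) (hm : 0 < m)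
    (A Q : Matrix (Fin n) (Fin n) ℝ) (B S : Matrix (Fin n) (Fin m) ℝ)
    (R : Matrix (Fin m) (Fin m) ℝ)
    (hPi : (fromBlocks Q S Sᵀ R).PosSemidef)
    (Xo : Matrix (Fin n) (Fin n) ℝ) (hXo : IsCGDARESolution A Q B S R Xo)
    (ν : ℕ)
    (hν : ν = sInf {k : ℕ |
      {v : Fin n → ℝ | ((AX A B S R Xo) ^ k).mulVec v = 0} =
        {v : Fin n → ℝ | ((AX A B S R Xo) ^ (k + 1)).mulVec v = 0}})
    (T : ℕ) (hT : 1 ≤ T)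
    (P : Matrix (Fin n) (Fin n) ℝ) (hP : P.PosSemidef)
    (X : ℕ → Matrix (Fin n) (Fin n) ℝ) (hterm : X T = P)
    (hrec : ∀ t < T, X t = Ricc A Q B S R (X (t + 1)))
    (hsymm : ∀ t ≤ T, (X t)ᵀ = X t)
    (hker : ∀ t ≤ T, KerCond A B S R (X t)) :
    ∀ τ : ℕ, ν ≤ τ → τ ≤ T →
      ∀ u : Fin n → ℝ, ((AX A B S R Xo) ^ n).mulVec u = 0 →
        (X (T - τ) - Xo).mulVec u = 0 := by
  classical
  obtain ⟨hXoSym, hXoEq, hXoKer⟩ := hXo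
  have hR : Rᵀ = R := by
    have h := hPi.1
    ext i j
    have h2 := congrFun (congrFun h (Sum.inr i)) (Sum.inr j)
    simp only [Matrix.conjTranspose_apply, Matrix.fromBlocks_apply₂₂, star_trivial] at h2
    rw [Matrix.transpose_apply]
    exact h2
  set A0 := AX A B S R Xo with hA0
  have hstep : ∀ τ : ℕ, τ ≤ T → ∀ u : Fin n → ℝ, (A0 ^ τ).mulVec u = 0 →
      (X (T - τ) - Xo).mulVec u = 0 := by
    intro τ
    induction τ with
    | zero =>
      intro _ u hu
      rw [pow_zero, Matrix.one_mulVec] at hu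
      rw [hu, Matrix.mulVec_zero]
    | succ τ ih =>
      intro hτT u hu
      have hτ : τ ≤ T := Nat.le_of_succ_le hτT
      have hlt : T - (τ+1) < T := by omega
      have hidx : T - (τ+1) + 1 = T - τ := by omega
      have hrec' := hrec (T - (τ+1)) hlt
      rw [hidx] at hrec'
      have hXsym := hsymm (T - τ) (by omega)
      have hXker := hker (T - τ) (by omega)
      have hdiff : X (T-(τ+1)) - Xo
          = (AX A B S R (X (T-τ)))ᵀ * (X (T-τ) - Xo) * A0 := by
        calc X (T-(τ+1)) - Xo
            = Ricc A Q B S R (X (T-τ)) - Ricc A Q B S R Xo := by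
              conv_lhs => rw [hrec', hXoEq]
        _ = (AX A B S R (X (T-τ)))ᵀ * (X (T-τ) - Xo) * A0 :=
              riccDiff hR hXsym hXoSym hXker hXoKer
      rw [hdiff]
      have hAu : (A0 ^ τ).mulVec (A0.mulVec u) = 0 := by
        rw [Matrix.mulVec_mulVec, ← pow_succ]
        exact hu
      have h0 := ih hτ (A0.mulVec u) hAu
      rw [Matrix.mul_assoc, ← Matrix.mulVec_mulVec, ← Matrix.mulVec_mulVec, h0,
        Matrix.mulVec_zero]
  intro τ hντ hτT u hu
  apply hstep τ hτT
  rcases le_or_gt n τ with hcase | hcase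
  · rw [show τ = (τ - n) + n by omega, pow_add, ← Matrix.mulVec_mulVec, hu,
      Matrix.mulVec_zero]
  · have hνn : ν ≤ n := by omega
    have hmem : {v : Fin n → ℝ | (A0 ^ ν).mulVec v = 0}
        = {v : Fin n → ℝ | (A0 ^ (ν+1)).mulVec v = 0} := by
      have hmem' : ν ∈ {k : ℕ | {v : Fin n → ℝ | (A0 ^ k).mulVec v = 0}
          = {v : Fin n → ℝ | (A0 ^ (k+1)).mulVec v = 0}} := by
        rw [hν]
        exact Nat.sInf_mem (ker_pow_exists A0)
      exact hmem'
    have hstab := ker_pow_stab A0 ν hmem (n - ν)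
    rw [show ν + (n - ν) = n by omega] at hstab
    have hu' : (A0 ^ ν).mulVec u = 0 := by
      have : u ∈ {v : Fin n → ℝ | (A0 ^ n).mulVec v = 0} := hu
      rw [hstab] at this
      exact this
    rw [show τ = (τ - ν) + ν by omega, pow_add, ← Matrix.mulVec_mulVec, hu',
      Matrix.mulVec_zero]
end

section
/- Let X∘ be a symmetric solution of CGDARE(Σ) and suppose that, for some 1 ≤ p < n, the closed-loop matrix has the block upper-triangular form A_{X∘} = [[N₀, C], [0, Z]] with N₀ ∈ ℝ^{p×p} and Z ∈ ℝ^{(n−p)×(n−p)}, and partition B = [B₁; B₂] conformably with B₂ ∈ ℝ^{(n−p)×m}. Let X_{t+1} = X_{t+1}ᵀ satisfy ker R_{X_{t+1}} ⊆ ker S_{X_{t+1}} and suppose X_{t+1} − X∘ = [[0, 0], [0, Ψ_{t+1}]] for some symmetric Ψ_{t+1} ∈ ℝ^{(n−p)×(n−p)}. Then X_t := ℛ(X_{t+1}) satisfies X_t − X∘ = [[0, 0], [0, Ψ_t]], where Ψ_t = Zᵀ Ψ_{t+1} Z − Zᵀ Ψ_{t+1} B₂ (R_{X∘} + B₂ᵀ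 Ψ_{t+1} B₂)† B₂ᵀ Ψ_{t+1} Z; i.e., the difference from X∘ evolves according to a reduced-order homogeneous generalised Riccati difference equation. -/
open Matrix

section Aux

variable {κ : Type*} [Fintype κ] [DecidableEq κ]

set_option maxHeartbeats 1000000 in
lemma exists_penrose (M : Matrix κ κ ℝ) (hM : Mᵀ = M) :
    ∃ P : Matrix κ κ ℝ,
      M * P * M = M ∧ P * M * P = P ∧ (M * P)ᵀ = M * P ∧ (P * M)ᵀ = P * M := by
  classical
  have hH : M.IsHermitian := by rwa [Matrix.IsHermitian, conjTranspose_eq_transpose_of_trivial]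
  set U : Matrix κ κ ℝ := (hH.eigenvectorUnitary : Matrix κ κ ℝ) with hU
  have hU1 : U * star U = 1 := (Matrix.mem_unitaryGroup_iff).mp hH.eigenvectorUnitary.2
  have hU2 : star U * U = 1 := (Matrix.mem_unitaryGroup_iff').mp hH.eigenvectorUnitary.2
  set d := hH.eigenvalues with hd
  have hsp : M = U * diagonal d * star U := by simpa using hH.spectral_theorem
  clear_value U d
  set e : κ → ℝ := fun i => if d i = 0 then 0 else (d i)⁻¹ with he
  have hstar : ∀ X : Matrix κ κ ℝ, star X = Xᵀ := fun X => by
    rw [Matrix.star_eq_conjTranspose, conjTranspose_eq_transpose_of_trivial]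
  have hmul : ∀ X Y : Matrix κ κ ℝ,
      (U * X * star U) * (U * Y * star U) = U * (X * Y) * star U := by
    intro X Y
    calc (U * X * star U) * (U * Y * star U) = U * X * (star U * U) * Y * star U := by
          noncomm_ring
      _ = U * (X * Y) * star U := by rw [hU2]; noncomm_ring
  have hfun1 : (fun i => d i * e i * d i) = d := by
    funext i
    by_cases h : d i = 0
    · simp [Pi.mul_apply, he, h]
    · field_simp [Pi.mul_apply, he, h]
      simp [he, h]
  have hfun2 : (fun i => e i * d i * e i) = e := by
    funext i
    by_cases h : d i = 0
    · simp [Pi.mul_apply, he, h]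
    · field_simp [Pi.mul_apply, he, h]
      simp [he, h]
  have hde : diagonal d * diagonal e * diagonal d = diagonal d := by
    rw [diagonal_mul_diagonal, diagonal_mul_diagonal]
    exact congrArg diagonal hfun1
  have hed : diagonal e * diagonal d * diagonal e = diagonal e := by
    rw [diagonal_mul_diagonal, diagonal_mul_diagonal]
    exact congrArg diagonal hfun2
  have hsymm : ∀ f : κ → ℝ, (U * diagonal f * star U)ᵀ = U * diagonal f * star U := by
    intro f
    rw [hstar, transpose_mul, transpose_mul, transpose_transpose, diagonal_transpose, mul_assoc]
  refine ⟨U * diagonal e * star U, ?_, ?_, ?_, ?_⟩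
  · rw [hsp, hmul, hmul, mul_assoc (diagonal d), ← mul_assoc (diagonal d), hde]
  · rw [hsp, hmul, hmul, mul_assoc (diagonal e), ← mul_assoc (diagonal e), hed]
  · rw [hsp, hmul, diagonal_mul_diagonal]; exact hsymm _
  · rw [hsp, hmul, diagonal_mul_diagonal]; exact hsymm _

lemma penrose_unique {α β : Type*} [Fintype α] [Fintype β]
    (M : Matrix α β ℝ) (P P' : Matrix β α ℝ)
    (h1 : M * P * M = M) (h2 : P * M * P = P) (h3 : (M * P)ᵀ = M * P) (h4 : (P * M)ᵀ = P * M)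
    (g1 : M * P' * M = M) (g2 : P' * M * P' = P') (g3 : (M * P')ᵀ = M * P')
    (g4 : (P' * M)ᵀ = P' * M) : P = P' := by
  have hMP : M * P = M * P' := by
    calc M * P = (M * P)ᵀ := h3.symm
      _ = Pᵀ * Mᵀ := transpose_mul _ _
      _ = Pᵀ * (M * P' * M)ᵀ := by rw [g1]
      _ = Pᵀ * (Mᵀ * (M * P')ᵀ) := by rw [transpose_mul (M * P') M]
      _ = Pᵀ * (Mᵀ * (M * P')) := by rw [g3]
      _ = (Pᵀ * Mᵀ) * (M * P') := (Matrix.mul_assoc Pᵀ Mᵀ (M * P')).symm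
      _ = (M * P)ᵀ * (M * P') := by rw [transpose_mul]
      _ = (M * P) * (M * P') := by rw [h3]
      _ = (M * P * M) * P' := by rw [Matrix.mul_assoc (M * P) M P']
      _ = M * P' := by rw [h1]
  have hPM : P * M = P' * M := by
    calc P * M = (P * M)ᵀ := h4.symm
      _ = Mᵀ * Pᵀ := transpose_mul _ _
      _ = (M * P' * M)ᵀ * Pᵀ := by rw [g1]
      _ = (Mᵀ * (P'ᵀ * Mᵀ)) * Pᵀ := by rw [transpose_mul (M * P') M, transpose_mul M P']
      _ = (Mᵀ * P'ᵀ) * (Mᵀ * Pᵀ) := by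
            rw [← Matrix.mul_assoc Mᵀ P'ᵀ Mᵀ, Matrix.mul_assoc (Mᵀ * P'ᵀ) Mᵀ Pᵀ]
      _ = (P' * M)ᵀ * (P * M)ᵀ := by rw [transpose_mul, transpose_mul]
      _ = (P' * M) * (P * M) := by rw [g4, h4]
      _ = P' * (M * P * M) := by
            rw [Matrix.mul_assoc P' M (P * M), ← Matrix.mul_assoc M P M]
      _ = P' * M := by rw [h1]
  calc P = P * M * P := h2.symm
    _ = P * (M * P) := by rw [Matrix.mul_assoc]
    _ = P * (M * P') := by rw [hMP]
    _ = (P * M) * P' := by rw [Matrix.mul_assoc]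
    _ = (P' * M) * P' := by rw [hPM]
    _ = P' := g2

lemma mpinv_spec (M : Matrix κ κ ℝ) (hM : Mᵀ = M) :
    M * mpinv M * M = M ∧ mpinv M * M * mpinv M = mpinv M ∧
      (M * mpinv M)ᵀ = M * mpinv M ∧ (mpinv M * M)ᵀ = mpinv M * M := by
  have h := exists_penrose M hM
  rw [mpinv, dif_pos h]
  exact h.choose_spec

lemma mpinv_transpose (M : Matrix κ κ ℝ) (hM : Mᵀ = M) : (mpinv M)ᵀ = mpinv M := by
  obtain ⟨h1, h2, h3, h4⟩ := mpinv_spec M hM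
  set P := mpinv M with hP
  refine penrose_unique M Pᵀ P ?_ ?_ ?_ ?_ h1 h2 h3 h4
  · calc M * Pᵀ * M = Mᵀ * Pᵀ * Mᵀ := by rw [hM]
      _ = (M * (P * M))ᵀ := by rw [transpose_mul M (P * M), transpose_mul]
      _ = (M * P * M)ᵀ := by rw [Matrix.mul_assoc]
      _ = Mᵀ := by rw [h1]
      _ = M := hM
  · calc Pᵀ * M * Pᵀ = Pᵀ * Mᵀ * Pᵀ := by rw [hM]
      _ = (P * (M * P))ᵀ := by rw [transpose_mul P (M * P), transpose_mul]
      _ = (P * M * P)ᵀ := by rw [Matrix.mul_assoc]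
      _ = Pᵀ := by rw [h2]
  · have h : M * Pᵀ = P * M := by
      calc M * Pᵀ = Mᵀ * Pᵀ := by rw [hM]
        _ = (P * M)ᵀ := (transpose_mul _ _).symm
        _ = P * M := h4
    rw [h]; exact h4
  · have h : Pᵀ * M = M * P := by
      calc Pᵀ * M = Pᵀ * Mᵀ := by rw [hM]
        _ = (M * P)ᵀ := (transpose_mul _ _).symm
        _ = M * P := h3
    rw [h]; exact h3

lemma ker_to_matrix {ι : Type*} [Fintype ι]
    (RR : Matrix κ κ ℝ) (SS : Matrix ι κ ℝ) (P : Matrix κ κ ℝ)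
    (hP : RR * P * RR = RR)
    (hker : ∀ v : κ → ℝ, RR.mulVec v = 0 → SS.mulVec v = 0) :
    SS * P * RR = SS := by
  have h : SS * (1 - P * RR) = 0 := by
    ext i j
    have hv : RR.mulVec ((1 - P * RR).mulVec (Pi.single j 1)) = 0 := by
      rw [mulVec_mulVec]
      have h0 : RR * (1 - P * RR) = 0 := by
        rw [Matrix.mul_sub, Matrix.mul_one, ← Matrix.mul_assoc, hP, sub_self]
      rw [h0, zero_mulVec]
    have hS := hker _ hv
    rw [mulVec_mulVec] at hS
    have h2 := congrFun hS i
    simpa [mulVec_single] using h2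
  have h2 : SS - SS * (P * RR) = 0 := by
    rw [Matrix.mul_sub, Matrix.mul_one] at h
    exact h
  have h3 : SS * (P * RR) = SS := (sub_eq_zero.mp h2).symm
  rw [Matrix.mul_assoc]
  exact h3

lemma key_mat {n m : Type*} [Fintype n] [Fintype m]
    (a t d : Matrix n n ℝ) (b kt : Matrix n m ℝ) (bt k : Matrix m n ℝ)
    (ro r1 p1 : Matrix m m ℝ)
    (hr1 : r1 = ro + bt * d * b)
    (hpen1 : r1 * p1 * r1 = r1)
    (hw : (t * d * b) * p1 * r1 = t * d * b)
    (hwt : r1 * p1 * (bt * d * a) = bt * d * a) :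
    (t + kt * bt) * d * (a + b * k)
      - (kt * r1 + t * d * b) * p1 * (r1 * k + bt * d * a)
      + kt * (ro * k)
    = t * d * a - t * d * b * (p1 * (bt * d * a)) := by
  have A1 : r1 * (p1 * (r1 * k)) = ro * k + bt * (d * (b * k)) := by
    have h := congrArg (· * k) hpen1
    simp only [Matrix.mul_assoc] at h
    rw [h, hr1]
    simp only [Matrix.add_mul, Matrix.mul_assoc]
  have A2 : r1 * (p1 * (bt * (d * a))) = bt * (d * a) := by
    simpa only [Matrix.mul_assoc] using hwt
  have A3 : t * (d * (b * (p1 * (r1 * k)))) = t * (d * (b * k)) := by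
    have h := congrArg (· * k) hw
    simp only [Matrix.mul_assoc] at h
    exact h
  simp only [Matrix.add_mul, Matrix.mul_add, Matrix.sub_mul, Matrix.mul_sub,
    Matrix.mul_assoc, sub_eq_add_neg, neg_add]
  rw [A1, A2, A3]
  simp only [Matrix.mul_add, neg_add]
  abel

end Aux

/-- reduction of the generalised Riccati difference equation. Here
`ℝ^n = ℝ^p × ℝ^q` (`q = n - p`), `A_{X∘} = [[N₀, C], [0, Z]]`, `B = [B₁; B₂]` and the
difference from the reference solution `X∘` evolves according to the reduced-order
homogeneous generalised Riccati difference equation. -/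
theorem stmt_18 {p q m : ℕ} (hp : 0 < p) (hq : 0 < q) (hm : 0 < m)
    (A Q : Matrix (Fin p ⊕ Fin q) (Fin p ⊕ Fin q) ℝ)
    (B S : Matrix (Fin p ⊕ Fin q) (Fin m) ℝ)
    (R : Matrix (Fin m) (Fin m) ℝ)
    (hPi : (fromBlocks Q S Sᵀ R).PosSemidef)
    (Xo : Matrix (Fin p ⊕ Fin q) (Fin p ⊕ Fin q) ℝ) (hXo : IsCGDARESolution A Q B S R Xo)
    (N₀ : Matrix (Fin p) (Fin p) ℝ) (C : Matrix (Fin p) (Fin q) ℝ)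
    (Z : Matrix (Fin q) (Fin q) ℝ)
    (hAXo : AX A B S R Xo = fromBlocks N₀ C 0 Z)
    (X1 : Matrix (Fin p ⊕ Fin q) (Fin p ⊕ Fin q) ℝ) (hX1 : X1ᵀ = X1)
    (hk1 : KerCond A B S R X1)
    (Ψ : Matrix (Fin q) (Fin q) ℝ) (hΨ : Ψᵀ = Ψ)
    (hΔ : X1 - Xo = fromBlocks 0 0 0 Ψ) :
    Ricc A Q B S R X1 - Xo =
      fromBlocks 0 0 0
        (Zᵀ * Ψ * Z -
          Zᵀ * Ψ * (B.submatrix Sum.inr (id : Fin m → Fin m)) *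
            mpinv (RX R B Xo +
              (B.submatrix Sum.inr (id : Fin m → Fin m))ᵀ * Ψ *
                (B.submatrix Sum.inr (id : Fin m → Fin m))) *
            (B.submatrix Sum.inr (id : Fin m → Fin m))ᵀ * Ψ * Z) := by
  classical
  obtain ⟨hXos, hXeq, hker⟩ := hXo
  set B₂ : Matrix (Fin q) (Fin m) ℝ := B.submatrix Sum.inr (id : Fin m → Fin m) with hB₂
  set B₁ : Matrix (Fin p) (Fin m) ℝ := toRows₁ B with hB₁
  have hBr : B = fromRows B₁ B₂ := by
    rw [hB₁, hB₂, show B.submatrix Sum.inr (id : Fin m → Fin m) = toRows₂ B from rfl,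
      fromRows_toRows]
  set D : Matrix (Fin p ⊕ Fin q) (Fin p ⊕ Fin q) ℝ := fromBlocks 0 0 0 Ψ with hDdef
  have hX1eq : X1 = Xo + D := by
    rw [← hΔ]; abel
  have hDs : Dᵀ = D := by
    rw [hDdef, fromBlocks_transpose, hΨ]; simp
  have hR : Rᵀ = R := by
    have h := hPi.1
    ext i j
    have h2 := congrFun (congrFun h (Sum.inr i)) (Sum.inr j)
    simpa using h2
  set Ro := RX R B Xo with hRo
  set So := SX A B S Xo with hSo
  set Po := mpinv Ro with hPo
  set K := Po * Soᵀ with hK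
  set Ao := A - B * K with hAo
  have hAoB : Ao = fromBlocks N₀ C 0 Z := by
    rw [← hAXo, hAo, hK, hPo, hSo, hRo]
    unfold AX KX
    rfl
  set R1 := RX R B X1 with hR1d
  set S1 := SX A B S X1 with hS1d
  set P1 := mpinv R1 with hP1
  have hRos : Roᵀ = Ro := by
    rw [hRo]; unfold RX
    simp [transpose_add, transpose_mul, hXos, hR, Matrix.mul_assoc]
  have hR1s : R1ᵀ = R1 := by
    rw [hR1d]; unfold RX
    simp [transpose_add, transpose_mul, hX1, hR, Matrix.mul_assoc]
  obtain ⟨hpen1o, hpen2o, hpen3o, hpen4o⟩ := mpinv_spec Ro hRos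
  obtain ⟨hpen11, hpen21, hpen31, hpen41⟩ := mpinv_spec R1 hR1s
  rw [← hPo] at hpen1o hpen2o hpen3o hpen4o
  rw [← hP1] at hpen11 hpen21 hpen31 hpen41
  have hPos : Poᵀ = Po := mpinv_transpose Ro hRos
  have hP1s : P1ᵀ = P1 := mpinv_transpose R1 hR1s
  have hSoker : So * Po * Ro = So := ker_to_matrix Ro So Po hpen1o hker
  have hS1ker : S1 * P1 * R1 = S1 := ker_to_matrix R1 S1 P1 hpen11 hk1
  have hKt : Kᵀ = So * Po := by rw [hK, transpose_mul, hPos, transpose_transpose]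
  have hSoK : Kᵀ * Ro = So := by rw [hKt]; exact hSoker
  have hSot : Soᵀ = Ro * K := by
    rw [← hSoK, transpose_mul, hRos, transpose_transpose]
  have hA : A = Ao + B * K := by rw [hAo]; abel
  have hAt : Aᵀ = Aoᵀ + Kᵀ * Bᵀ := by rw [hA, transpose_add, transpose_mul]
  have hR1Ro : R1 = Ro + Bᵀ * D * B := by
    rw [hR1d, hRo]; unfold RX
    rw [hX1eq]
    simp only [Matrix.mul_add, Matrix.add_mul]
    abel
  have hBDB : Bᵀ * D * B = B₂ᵀ * Ψ * B₂ := by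
    rw [hDdef, hBr, transpose_fromRows, fromCols_mul_fromBlocks, fromCols_mul_fromRows]
    simp [Matrix.mul_assoc]
  have hArg : Ro + B₂ᵀ * Ψ * B₂ = R1 := by rw [hR1Ro, hBDB]
  have h1 : S1 = So + Aᵀ * D * B := by
    rw [hS1d, hSo]; unfold SX
    rw [hX1eq]
    simp only [Matrix.mul_add, Matrix.add_mul]
    abel
  have hS1e : S1 = Kᵀ * R1 + Aoᵀ * D * B := by
    rw [h1, ← hSoK, hAt, hR1Ro]
    simp only [Matrix.add_mul, Matrix.mul_add, Matrix.mul_assoc]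
    abel
  have hS1t : S1ᵀ = R1 * K + Bᵀ * D * Ao := by
    rw [hS1e]
    simp [transpose_add, transpose_mul, hR1s, hDs, Matrix.mul_assoc]
  have hw : (Aoᵀ * D * B) * P1 * R1 = Aoᵀ * D * B := by
    have h := hS1ker
    rw [hS1e] at h
    have e : (Kᵀ * R1 + Aoᵀ * D * B) * P1 * R1
        = Kᵀ * R1 + (Aoᵀ * D * B) * P1 * R1 := by
      simp only [Matrix.add_mul]
      congr 1
      rw [Matrix.mul_assoc Kᵀ R1 P1, Matrix.mul_assoc Kᵀ (R1 * P1) R1,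
        hpen11]
    rw [e] at h
    exact add_left_cancel h
  have hWt : (Aoᵀ * D * B)ᵀ = Bᵀ * D * Ao := by
    simp [transpose_mul, hDs, Matrix.mul_assoc]
  have hwt : R1 * P1 * (Bᵀ * D * Ao) = Bᵀ * D * Ao := by
    have h := congrArg Matrix.transpose hw
    rw [transpose_mul, transpose_mul, hWt, hP1s, hR1s] at h
    rw [Matrix.mul_assoc]
    exact h
  have hkey := key_mat Ao Aoᵀ D B Kᵀ Bᵀ K Ro R1 P1 hR1Ro hpen11 hw hwt
  have hRicc1 : Ricc A Q B S R X1 = Aᵀ * X1 * A - S1 * P1 * S1ᵀ + Q := by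
    rw [hS1d, hP1, hR1d]
    unfold Ricc SX
    rfl
  have hRicco : Ricc A Q B S R Xo = Aᵀ * Xo * A - So * Po * Soᵀ + Q := by
    rw [hSo, hPo, hRo]
    unfold Ricc SX
    rfl
  have hstep : Ricc A Q B S R X1 - Xo
      = Aᵀ * D * A - S1 * P1 * S1ᵀ + So * Po * Soᵀ := by
    conv_lhs => rw [hXeq]
    rw [hRicc1, hRicco, hX1eq]
    simp only [Matrix.mul_add, Matrix.add_mul]
    abel
  have hmain : Ricc A Q B S R X1 - Xo
      = Aoᵀ * D * Ao - Aoᵀ * D * B * (P1 * (Bᵀ * D * Ao)) := by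
    rw [hstep, hS1t, hS1e, hSot, ← hKt, hAt, hA]
    exact hkey
  rw [hmain, hArg, ← hP1, hAoB, hDdef, hBr]
  simp [fromBlocks_transpose, transpose_fromRows, fromBlocks_multiply,
    fromBlocks_mul_fromRows, fromRows_mul_fromCols, fromCols_mul_fromBlocks,
    fromCols_mul_fromRows, Matrix.mul_fromCols, Matrix.mul_assoc,
    sub_eq_add_neg, Matrix.fromBlocks_add, Matrix.fromBlocks_neg]
  ext (i | i) (j | j) <;> simp [fromBlocks, fromCols, fromRows] <;> rfl
end
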